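/- Let G be a finite simple graph with an nd-decomposition P_1, ..., P_k, let T be the associated type graph on {1, ..., k}, and let 𝓘 denote the family of maximal independent sets of T. Suppose x : 𝓘 → ℕ satisfies: for each i such that P_i induces a clique, Σ_{I ∈ 𝓘, i ∈ I} x(I) ≥ |P_i|; and for each i such that P_i induces an independent set, Σ_{I ∈ 𝓘, i ∈ I} x(I) ≥ 1. Then G admits a proper coloring with Σ_{I ∈ 𝓘} x(I) colors, i.e., χ(G) ≤ Σ_{I ∈ 𝓘} x(I). -/

import Mathlib

/-- A set of vertices is independent if no two of its vertices are adjacent. -/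
def SimpleGraph.IsIndep {V : Type*} (G : SimpleGraph V) (s : Set V) : Prop :=
  s.Pairwise fun u v => ¬ G.Adj u v

/-- The type graph of a partition `P` of the vertices of `G`: distinct indices `i, j` are
adjacent iff all edges between `P i` and `P j` are present in `G`. -/
def typeGraph {V : Type*} (G : SimpleGraph V) {k : ℕ} (P : Fin k → Finset V) :
    SimpleGraph (Fin k) where
  Adj i j := i ≠ j ∧ ∀ u ∈ P i, ∀ v ∈ P j, G.Adj u v
  symm := by
    constructor
    intro i j h
    exact ⟨h.1.symm, fun u hu v hv => (h.2 v hv u hu).symm⟩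
  loopless := by
    constructor
    intro i h
    exact h.1 rfl

open Classical in
/-- The family of maximal independent sets of a graph on `Fin k`. -/
noncomputable def maxIndepSets {k : ℕ} (T : SimpleGraph (Fin k)) :
    Finset (Finset (Fin k)) :=
  Finset.univ.filter fun I =>
    T.IsIndep ↑I ∧ ∀ J : Finset (Fin k), T.IsIndep ↑J → I ⊆ J → I = J

/-- Let `G` have an nd-decomposition `P_1, …, P_k` with type graph `T` and let `𝓘` be the
family of maximal independent sets of `T`.  If `x : 𝓘 → ℕ` satisfies the covering
constraints (`Σ_{I ∋ i} x I ≥ |P i|` for clique parts and `Σ_{I ∋ i} x I ≥ 1` for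
independent-set parts), then `G` is colorable with `Σ_I x I` colors. -/
theorem colorable_of_covering_solution {V : Type*} [Fintype V] (G : SimpleGraph V)
    (k : ℕ) (P : Fin k → Finset V)
    (hpart : ∀ v : V, ∃! i : Fin k, v ∈ P i)
    (hcliqueIndep : ∀ i : Fin k, G.IsClique ↑(P i) ∨ G.IsIndep ↑(P i))
    (hhom : ∀ i j : Fin k, i ≠ j →
      (∀ u ∈ P i, ∀ v ∈ P j, G.Adj u v) ∨ (∀ u ∈ P i, ∀ v ∈ P j, ¬ G.Adj u v))
    (x : Finset (Fin k) → ℕ)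
    (hclq : ∀ i : Fin k, G.IsClique ↑(P i) →
      (P i).card ≤ ∑ I ∈ (maxIndepSets (typeGraph G P)).filter (fun I => i ∈ I), x I)
    (hind : ∀ i : Fin k, G.IsIndep ↑(P i) →
      1 ≤ ∑ I ∈ (maxIndepSets (typeGraph G P)).filter (fun I => i ∈ I), x I) :
    G.Colorable (∑ I ∈ maxIndepSets (typeGraph G P), x I) := by
  classical
  set 𝓘 := maxIndepSets (typeGraph G P) with h𝓘
  by_cases hV : Nonempty V
  swap
  · exact ⟨SimpleGraph.Coloring.mk (fun v => absurd ⟨v⟩ hV) (fun {u} => absurd ⟨u⟩ hV)⟩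
  -- the color type is nonempty
  have hcard : Fintype.card ((I : {I // I ∈ 𝓘}) × Fin (x I.1)) = ∑ I ∈ 𝓘, x I := by
    rw [Fintype.card_sigma]
    simp only [Fintype.card_fin]
    exact Finset.sum_coe_sort 𝓘 x
  have hne0 : Nonempty ((I : {I // I ∈ 𝓘}) × Fin (x I.1)) := by
    obtain ⟨v0⟩ := hV
    have hj0 : v0 ∈ P (hpart v0).choose := (hpart v0).choose_spec.1
    set j0 := (hpart v0).choose
    have h1 : 1 ≤ ∑ I ∈ 𝓘.filter (fun I => j0 ∈ I), x I := by
      rcases hcliqueIndep j0 with h | h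
      · exact le_trans (Finset.card_pos.mpr ⟨v0, hj0⟩) (hclq j0 h)
      · exact hind j0 h
    rw [← Fintype.card_pos_iff, hcard]
    calc 1 ≤ ∑ I ∈ 𝓘.filter (fun I => j0 ∈ I), x I := h1
      _ ≤ ∑ I ∈ 𝓘, x I := Finset.sum_le_sum_of_subset (Finset.filter_subset _ _)
  have hIindep : ∀ I ∈ 𝓘, (typeGraph G P).IsIndep (↑I : Set (Fin k)) := by
    intro I hI
    simp only [h𝓘, maxIndepSets, Finset.mem_filter] at hI
    exact hI.2.1
  have key : ∀ i : Fin k, ∃ f : V → ((I : {I // I ∈ 𝓘}) × Fin (x I.1)),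
      (∀ v, v ∈ P i → i ∈ ((f v).1 : Finset (Fin k))) ∧
      (G.IsClique ↑(P i) → Set.InjOn f ↑(P i)) := by
    intro i
    set F := 𝓘.filter (fun I => i ∈ I) with hF
    have hsum : ∑ I ∈ F, x I = Fintype.card ((I : {I // I ∈ F}) × Fin (x I.1)) := by
      rw [Fintype.card_sigma]
      simp only [Fintype.card_fin]
      exact (Finset.sum_coe_sort F x).symm
    let hmap : ((I : {I // I ∈ F}) × Fin (x I.1)) → ((I : {I // I ∈ 𝓘}) × Fin (x I.1)) :=
      fun b => ⟨⟨b.1.1, (Finset.mem_filter.mp b.1.2).1⟩, b.2⟩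
    have hmapinj : Function.Injective hmap := by
      rintro ⟨⟨I, hI⟩, c⟩ ⟨⟨J, hJ⟩, d⟩ hab
      have h1 : I = J := congrArg (fun b => ((b.1 : {I // I ∈ 𝓘}) : Finset (Fin k))) hab
      subst h1
      have h2 : c = d := eq_of_heq (Sigma.ext_iff.mp hab).2
      subst h2
      rfl
    have hmapmem : ∀ b, i ∈ ((hmap b).1 : Finset (Fin k)) :=
      fun b => (Finset.mem_filter.mp b.1.2).2
    by_cases hci : G.IsClique ↑(P i)
    · have hle : Fintype.card {v // v ∈ P i} ≤
          Fintype.card ((I : {I // I ∈ F}) × Fin (x I.1)) := by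
        rw [Fintype.card_coe, ← hsum]; exact hclq i hci
      obtain ⟨e⟩ := Function.Embedding.nonempty_of_card_le hle
      refine ⟨fun v => if h : v ∈ P i then hmap (e ⟨v, h⟩) else Classical.arbitrary _,
        ?_, ?_⟩
      · intro v hv; simp only [dif_pos hv]; exact hmapmem _
      · intro _ a ha b hb hab
        rw [Finset.mem_coe] at ha hb
        simp only [dif_pos ha, dif_pos hb] at hab
        exact congrArg Subtype.val (e.injective (hmapinj hab))
    · have hii : G.IsIndep ↑(P i) := (hcliqueIndep i).resolve_left hci
      have hpos : 0 < Fintype.card ((I : {I // I ∈ F}) × Fin (x I.1)) := by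
        rw [← hsum]; exact hind i hii
      obtain ⟨b⟩ := Fintype.card_pos_iff.mp hpos
      exact ⟨fun _ => hmap b, fun v _ => hmapmem b, fun hc => absurd hc hci⟩
  choose f hfmem hfinj using key
  have C : G.Coloring ((I : {I // I ∈ 𝓘}) × Fin (x I.1)) := by
    refine SimpleGraph.Coloring.mk (fun v => f (hpart v).choose v) ?_
    intro u v huv hne
    beta_reduce at hne
    have hu : u ∈ P (hpart u).choose := (hpart u).choose_spec.1
    have hv : v ∈ P (hpart v).choose := (hpart v).choose_spec.1
    set i := (hpart u).choose with hi
    set j := (hpart v).choose with hj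
    clear_value i j
    by_cases hij : i = j
    · subst hij
      have hclique : G.IsClique ↑(P i) := by
        rcases hcliqueIndep i with h | h
        · exact h
        · exact absurd huv (h hu hv (G.ne_of_adj huv))
      exact G.ne_of_adj huv (hfinj i hclique hu hv hne)
    · have hall : ∀ a ∈ P i, ∀ b ∈ P j, G.Adj a b := by
        rcases hhom i j hij with h | h
        · exact h
        · exact absurd huv (h u hu v hv)
      have hTadj : (typeGraph G P).Adj i j := ⟨hij, hall⟩
      have hia : i ∈ ((f i u).1 : Finset (Fin k)) := hfmem i u hu
      have hja : j ∈ ((f i u).1 : Finset (Fin k)) := by rw [hne]; exact hfmem j v hv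
      have hindep : (typeGraph G P).IsIndep ↑((f i u).1 : Finset (Fin k)) := by
        have h := hIindep _ (f i u).1.2
        exact h
      exact (hindep hia hja hij) hTadj
  exact hcard ▸ C.colorable
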